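/- Let {X_{n,i} : 1 ≤ i ≤ n, n ≥ 1} be a triangular array of random variables such that for each n the variables X_{n,1}, …, X_{n,n} are mutually independent with mean zero, and suppose there exist constants 0 < κ < 1 and c < ∞ with n^{−1} Σ_{i=1}^n E|X_{n,i}|^{2+κ} ≤ c n^{κ/2} for all n. Then (1/n) Σ_{i=1}^n X_{n,i} → 0 almost surely as n → ∞. -/

import Mathlib

open MeasureTheory ProbabilityTheory Filter Topology Finset
open Real

lemma aux_summable_of_eventually_le {f g : ℕ → ℝ} (hf : ∀ n, 0 ≤ f n)
    (h : ∀ᶠ n in atTop, f n ≤ g n) (hg : Summable g) : Summable f := by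
  obtain ⟨N, hN⟩ := eventually_atTop.1 h
  refine (summable_nat_add_iff N).1 ?_
  exact Summable.of_nonneg_of_le (fun n => hf _) (fun n => hN _ (Nat.le_add_left _ _))
    ((summable_nat_add_iff N).2 hg)

lemma aux_summable_exp_rpow {δ β : ℝ} (hδ : 0 < δ) (hβ : 0 < β) :
    Summable (fun n : ℕ => Real.exp (-(δ * (n : ℝ) ^ β))) := by
  refine aux_summable_of_eventually_le (fun n => (Real.exp_pos _).le) ?_
    (Real.summable_nat_rpow.2 (by norm_num : (-2 : ℝ) < -1))
  have h1 : Tendsto (fun n : ℕ => (n : ℝ) ^ (β / 2)) atTop atTop :=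
    (tendsto_rpow_atTop (by linarith)).comp tendsto_natCast_atTop_atTop
  filter_upwards [h1.eventually_ge_atTop ((2 / (β / 2)) / δ), eventually_ge_atTop 1] with n hn hn1
  have hn0 : (0 : ℝ) < n := by exact_mod_cast hn1
  have hlog : 2 * Real.log n ≤ δ * (n : ℝ) ^ β := by
    have h2 : Real.log n ≤ (n : ℝ) ^ (β / 2) / (β / 2) :=
      Real.log_le_rpow_div (Nat.cast_nonneg n) (by linarith)
    have h3 : (n : ℝ) ^ β = (n : ℝ) ^ (β / 2) * (n : ℝ) ^ (β / 2) := by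
      rw [← Real.rpow_add hn0]; ring_nf
    have h4 : (2 / (β / 2)) ≤ δ * (n : ℝ) ^ (β / 2) := by
      rw [div_le_iff₀ hδ] at hn; linarith [hn]
    have h5 : (0 : ℝ) < (n : ℝ) ^ (β / 2) := Real.rpow_pos_of_pos hn0 _
    calc 2 * Real.log n ≤ 2 * ((n : ℝ) ^ (β / 2) / (β / 2)) := by linarith
      _ = (2 / (β / 2)) * (n : ℝ) ^ (β / 2) := by ring
      _ ≤ (δ * (n : ℝ) ^ (β / 2)) * (n : ℝ) ^ (β / 2) := by
          exact mul_le_mul_of_nonneg_right h4 h5.le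
      _ = δ * (n : ℝ) ^ β := by rw [h3]; ring
  calc Real.exp (-(δ * (n : ℝ) ^ β)) ≤ Real.exp (Real.log ((n:ℝ) ^ (-2 : ℝ))) := by
        apply Real.exp_le_exp.2
        rw [Real.log_rpow hn0]
        linarith
    _ = (n : ℝ) ^ (-2 : ℝ) := Real.exp_log (Real.rpow_pos_of_pos hn0 _)

lemma aux_mgf_le {Ω : Type*} [MeasurableSpace Ω] (P : Measure Ω) [IsProbabilityMeasure P]
    (Z : Ω → ℝ) (hZ : Measurable Z) (L : ℝ) (hbd : ∀ ω, |Z ω| ≤ L)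
    (hmean : ∫ ω, Z ω ∂P = 0) (t : ℝ) (ht0 : 0 ≤ t) (htL : t * L ≤ 1) :
    mgf Z P t ≤ Real.exp (t ^ 2 * ∫ ω, (Z ω) ^ 2 ∂P) := by
  have hZint : Integrable Z P :=
    (integrable_const L).mono' hZ.aestronglyMeasurable
      (ae_of_all _ fun ω => by simpa using hbd ω)
  have hZ2int : Integrable (fun ω => (Z ω) ^ 2) P :=
    (integrable_const (L ^ 2)).mono' (hZ.pow_const 2).aestronglyMeasurable
      (ae_of_all _ fun ω => by
        rw [norm_pow, norm_eq_abs]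
        nlinarith [hbd ω, abs_nonneg (Z ω)])
  have hexp_int : Integrable (fun ω => Real.exp (t * Z ω)) P :=
    (integrable_const (Real.exp (t * L))).mono'
      ((hZ.const_mul t).exp).aestronglyMeasurable
      (ae_of_all _ fun ω => by
        have h1 : t * Z ω ≤ t * L :=
          mul_le_mul_of_nonneg_left (abs_le.1 (hbd ω)).2 ht0
        simp only [norm_eq_abs, abs_exp]
        exact Real.exp_le_exp.2 h1)
  have hpt : ∀ ω, Real.exp (t * Z ω) ≤ 1 + t * Z ω + (t * Z ω) ^ 2 := by
    intro ω
    have habs : |t * Z ω| ≤ 1 := by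
      rw [abs_mul, abs_of_nonneg ht0]
      calc t * |Z ω| ≤ t * L := mul_le_mul_of_nonneg_left (hbd ω) ht0
        _ ≤ 1 := htL
    have := (abs_le.1 (Real.abs_exp_sub_one_sub_id_le habs)).2
    linarith
  have h12 : Integrable (fun ω => 1 + t * Z ω) P :=
    (integrable_const 1).add (hZint.const_mul t)
  have hZ2int' : Integrable (fun ω => t ^ 2 * (Z ω) ^ 2) P := hZ2int.const_mul _
  have hint1 : Integrable (fun ω => 1 + t * Z ω + (t * Z ω) ^ 2) P := by
    have : (fun ω => 1 + t * Z ω + (t * Z ω) ^ 2)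
        = fun ω => (1 + t * Z ω) + t ^ 2 * (Z ω) ^ 2 := by funext ω; ring
    rw [this]; exact h12.add hZ2int'
  calc mgf Z P t = ∫ ω, Real.exp (t * Z ω) ∂P := rfl
    _ ≤ ∫ ω, (1 + t * Z ω + (t * Z ω) ^ 2) ∂P :=
        integral_mono hexp_int hint1 hpt
    _ = 1 + t ^ 2 * ∫ ω, (Z ω) ^ 2 ∂P := by
        have e0 : (fun ω => 1 + t * Z ω + (t * Z ω) ^ 2)
            = fun ω => (1 + t * Z ω) + t ^ 2 * (Z ω) ^ 2 := by funext ω; ring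
        rw [e0, integral_add h12 hZ2int', integral_add (integrable_const 1) (hZint.const_mul t),
          integral_const_mul, integral_const_mul, hmean, integral_const]
        simp
    _ ≤ Real.exp (t ^ 2 * ∫ ω, (Z ω) ^ 2 ∂P) := by
        have := Real.add_one_le_exp (t ^ 2 * ∫ ω, (Z ω) ^ 2 ∂P)
        linarith

lemma aux_chernoff_sum {Ω : Type*} [MeasurableSpace Ω] (P : Measure Ω) [IsProbabilityMeasure P]
    {n : ℕ} (Z : Fin n → Ω → ℝ) (hmeasZ : ∀ i, Measurable (Z i))
    (hindep : iIndepFun Z P)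
    (L : ℝ) (hL : 0 < L) (hbd : ∀ i ω, |Z i ω| ≤ L)
    (hmean : ∀ i, ∫ ω, Z i ω ∂P = 0)
    (t a V : ℝ) (ht0 : 0 ≤ t) (htL : t * L ≤ 1)
    (hV : ∑ i, ∫ ω, (Z i ω) ^ 2 ∂P ≤ V) :
    (P {ω | a ≤ ∑ i, Z i ω}).toReal ≤ Real.exp (-t * a + t ^ 2 * V) := by
  have hfun : (∑ i, Z i : Ω → ℝ) = fun ω => ∑ i, Z i ω := by
    funext ω; simp [Finset.sum_apply]
  have hsum_int : Integrable (fun ω => Real.exp (t * ∑ i, Z i ω)) P := by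
    refine (integrable_const (Real.exp (t * (n * L)))).mono' ?_ (ae_of_all _ fun ω => ?_)
    · exact ((Finset.measurable_sum univ fun i _ => hmeasZ i).const_mul t).exp.aestronglyMeasurable
    · have h1 : ∑ i, Z i ω ≤ n * L := by
        calc ∑ i, Z i ω ≤ ∑ _i : Fin n, L :=
              Finset.sum_le_sum fun i _ => (abs_le.1 (hbd i ω)).2
          _ = n * L := by simp [mul_comm]
      simp only [norm_eq_abs, abs_exp]
      exact Real.exp_le_exp.2 (mul_le_mul_of_nonneg_left h1 ht0)
  calc (P {ω | a ≤ ∑ i, Z i ω}).toReal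
      ≤ Real.exp (-t * a) * mgf (fun ω => ∑ i, Z i ω) P t :=
        measure_ge_le_exp_mul_mgf a ht0 hsum_int
    _ = Real.exp (-t * a) * ∏ i, mgf (Z i) P t := by
        rw [← hfun, hindep.mgf_sum hmeasZ]
    _ ≤ Real.exp (-t * a) * ∏ i, Real.exp (t ^ 2 * ∫ ω, (Z i ω) ^ 2 ∂P) := by
        refine mul_le_mul_of_nonneg_left ?_ (Real.exp_pos _).le
        exact Finset.prod_le_prod (fun i _ => mgf_nonneg)
          (fun i _ => aux_mgf_le P (Z i) (hmeasZ i) L (hbd i) (hmean i) t ht0 htL)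
    _ ≤ Real.exp (-t * a + t ^ 2 * V) := by
        rw [← Real.exp_sum, ← Real.exp_add]
        apply Real.exp_le_exp.2
        rw [← Finset.mul_sum]
        have := mul_le_mul_of_nonneg_left hV (sq_nonneg t)
        linarith

lemma aux_abs_integral {Ω : Type*} [MeasurableSpace Ω] (P : Measure Ω) (f : Ω → ℝ) :
    |∫ ω, f ω ∂P| ≤ ∫ ω, |f ω| ∂P := by
  simpa [Real.norm_eq_abs] using norm_integral_le_integral_norm (μ := P) f

lemma aux_row_bound {Ω : Type*} [MeasurableSpace Ω] (P : Measure Ω) [IsProbabilityMeasure P]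
    {n : ℕ} (W : Fin n → Ω → ℝ)
    (hmeas : ∀ i, Measurable (W i))
    (hindep : iIndepFun W P)
    (hint : ∀ i, Integrable (W i) P)
    (hmean : ∀ i, ∫ ω, W i ω ∂P = 0)
    (p : ℝ) (hp : 2 ≤ p)
    (hmomint : ∀ i, Integrable (fun ω => |W i ω| ^ p) P)
    (T M a : ℝ) (hT : ∑ i, ∫ ω, |W i ω| ^ p ∂P ≤ T)
    (hM : 1 ≤ M) (ha : 0 ≤ a)
    (hmu : T / M ^ (p - 1) ≤ a) :
    (P {ω | 3 * a ≤ |∑ i, W i ω|}).toReal ≤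
      T / M ^ p + 2 * Real.exp (-(a / (2 * M)) + ((n : ℝ) + T) / (4 * M ^ 2)) := by
  have hM0 : (0 : ℝ) < M := lt_of_lt_of_le one_pos hM
  have hp0 : (0 : ℝ) ≤ p := by linarith
  have hmom_nonneg : ∀ i : Fin n, 0 ≤ ∫ ω, |W i ω| ^ p ∂P := fun i =>
    integral_nonneg fun ω => Real.rpow_nonneg (abs_nonneg _) _
  -- truncation
  set Y : Fin n → Ω → ℝ := fun i ω => if |W i ω| ≤ M then W i ω else 0 with hY
  have hYmeas : ∀ i, Measurable (Y i) := fun i =>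
    Measurable.ite (measurableSet_le (hmeas i).abs measurable_const) (hmeas i) measurable_const
  have hYbd : ∀ i ω, |Y i ω| ≤ M := by
    intro i ω
    by_cases h : |W i ω| ≤ M
    · simpa [hY, h] using h
    · simp [hY, h, hM0.le]
  have hYint : ∀ i, Integrable (Y i) P := fun i =>
    (integrable_const M).mono' (hYmeas i).aestronglyMeasurable
      (ae_of_all _ fun ω => by simpa using hYbd i ω)
  set μv : Fin n → ℝ := fun i => ∫ ω, Y i ω ∂P with hμv
  have hμbd : ∀ i, |μv i| ≤ M := by
    intro i
    calc |μv i| ≤ ∫ ω, |Y i ω| ∂P := aux_abs_integral P _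
      _ ≤ ∫ _ω, M ∂P := integral_mono (hYint i).abs (integrable_const M) (fun ω => hYbd i ω)
      _ = M := by simp
  set Z : Fin n → Ω → ℝ := fun i ω => Y i ω - μv i with hZ
  set Z' : Fin n → Ω → ℝ := fun i ω => μv i - Y i ω with hZ'
  have hZmeas : ∀ i, Measurable (Z i) := fun i => (hYmeas i).sub measurable_const
  have hZ'meas : ∀ i, Measurable (Z' i) := fun i => measurable_const.sub (hYmeas i)
  have hZbd : ∀ i ω, |Z i ω| ≤ 2 * M := by
    intro i ω
    calc |Z i ω| ≤ |Y i ω| + |μv i| := abs_sub _ _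
      _ ≤ 2 * M := by have := hYbd i ω; have := hμbd i; linarith
  have hZ'bd : ∀ i ω, |Z' i ω| ≤ 2 * M := by
    intro i ω
    rw [show Z' i ω = -(Z i ω) by simp [hZ, hZ'], abs_neg]
    exact hZbd i ω
  have hZmean : ∀ i, ∫ ω, Z i ω ∂P = 0 := by
    intro i
    rw [show (fun ω => Z i ω) = fun ω => Y i ω - μv i from rfl,
      integral_sub (hYint i) (integrable_const _), integral_const]
    simp [hμv]
  have hZ'mean : ∀ i, ∫ ω, Z' i ω ∂P = 0 := by
    intro i
    rw [show (fun ω => Z' i ω) = fun ω => μv i - Y i ω from rfl,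
      integral_sub (integrable_const _) (hYint i), integral_const]
    simp [hμv]
  -- independence of truncated variables
  have hZindep : iIndepFun Z P := by
    have := hindep.comp (fun i x => (if |x| ≤ M then x else 0) - μv i)
      (fun i => (Measurable.ite (measurableSet_le measurable_abs measurable_const)
        measurable_id measurable_const).sub measurable_const)
    exact this
  have hZ'indep : iIndepFun Z' P := by
    have := hindep.comp (fun i x => μv i - (if |x| ≤ M then x else 0))
      (fun i => measurable_const.sub (Measurable.ite
        (measurableSet_le measurable_abs measurable_const) measurable_id measurable_const))
    exact this
  -- second moment bounds
  have hY2int : ∀ i, Integrable (fun ω => (Y i ω) ^ 2) P := fun i =>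
    (integrable_const (M ^ 2)).mono' ((hYmeas i).pow_const 2).aestronglyMeasurable
      (ae_of_all _ fun ω => by
        rw [norm_pow, norm_eq_abs]
        nlinarith [hYbd i ω, abs_nonneg (Y i ω)])
  have hZ2 : ∀ i : Fin n, ∫ ω, (Z i ω) ^ 2 ∂P ≤ 1 + ∫ ω, |W i ω| ^ p ∂P := by
    intro i
    have e1 : ∀ ω, (Z i ω) ^ 2 = (Y i ω) ^ 2 - (2 * μv i) * Y i ω + (μv i) ^ 2 := by
      intro ω; simp only [hZ]; ring
    have hint2 : Integrable (fun ω => (Y i ω) ^ 2 - (2 * μv i) * Y i ω) P :=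
      (hY2int i).sub ((hYint i).const_mul _)
    have e2 : ∫ ω, (Z i ω) ^ 2 ∂P = ∫ ω, (Y i ω) ^ 2 ∂P - (μv i) ^ 2 := by
      calc ∫ ω, (Z i ω) ^ 2 ∂P
          = ∫ ω, ((Y i ω) ^ 2 - (2 * μv i) * Y i ω + (μv i) ^ 2) ∂P := by
            congr 1; funext ω; exact e1 ω
        _ = (∫ ω, ((Y i ω) ^ 2 - (2 * μv i) * Y i ω) ∂P) + (μv i) ^ 2 := by
            rw [integral_add hint2 (integrable_const _), integral_const]; simp
        _ = ∫ ω, (Y i ω) ^ 2 ∂P - (2 * μv i) * μv i + (μv i) ^ 2 := by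
            rw [integral_sub (hY2int i) ((hYint i).const_mul _), integral_const_mul]
        _ = ∫ ω, (Y i ω) ^ 2 ∂P - (μv i) ^ 2 := by ring
    have e3 : ∫ ω, (Y i ω) ^ 2 ∂P ≤ 1 + ∫ ω, |W i ω| ^ p ∂P := by
      have hpt : ∀ ω, (Y i ω) ^ 2 ≤ 1 + |W i ω| ^ p := by
        intro ω
        by_cases h1 : |Y i ω| ≤ 1
        · have : (Y i ω) ^ 2 ≤ 1 := by nlinarith [abs_nonneg (Y i ω), sq_abs (Y i ω)]
          have := Real.rpow_nonneg (abs_nonneg (W i ω)) p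
          linarith
        · push_neg at h1
          have hYW : |Y i ω| ≤ |W i ω| := by
            by_cases h : |W i ω| ≤ M
            · simp [hY, h]
            · simp [hY, h, abs_nonneg]
          have h2 : (1:ℝ) ≤ |W i ω| := le_trans h1.le hYW
          have h3 : (Y i ω) ^ 2 ≤ |W i ω| ^ (2:ℝ) := by
            rw [show |W i ω| ^ (2:ℝ) = |W i ω| ^ (2:ℕ) by
              rw [← Real.rpow_natCast]; norm_num]
            calc (Y i ω) ^ 2 = |Y i ω| ^ 2 := by rw [sq_abs]
              _ ≤ |W i ω| ^ 2 := by nlinarith [abs_nonneg (Y i ω)]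
          have h4 : |W i ω| ^ (2:ℝ) ≤ |W i ω| ^ p :=
            Real.rpow_le_rpow_of_exponent_le h2 hp
          have := Real.rpow_nonneg (abs_nonneg (W i ω)) p
          linarith
      calc ∫ ω, (Y i ω) ^ 2 ∂P ≤ ∫ ω, (1 + |W i ω| ^ p) ∂P :=
            integral_mono (hY2int i) ((integrable_const 1).add (hmomint i)) hpt
        _ = 1 + ∫ ω, |W i ω| ^ p ∂P := by
            rw [integral_add (integrable_const 1) (hmomint i), integral_const]; simp
    linarith [sq_nonneg (μv i), e2, e3]
  have hV : ∑ i : Fin n, ∫ ω, (Z i ω) ^ 2 ∂P ≤ (n : ℝ) + T := by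
    calc ∑ i : Fin n, ∫ ω, (Z i ω) ^ 2 ∂P
        ≤ ∑ i : Fin n, (1 + ∫ ω, |W i ω| ^ p ∂P) := Finset.sum_le_sum fun i _ => hZ2 i
      _ = (n : ℝ) + ∑ i : Fin n, ∫ ω, |W i ω| ^ p ∂P := by
          rw [Finset.sum_add_distrib]; simp
      _ ≤ (n : ℝ) + T := by linarith
  have hV' : ∑ i : Fin n, ∫ ω, (Z' i ω) ^ 2 ∂P ≤ (n : ℝ) + T := by
    have : ∀ i : Fin n, (fun ω => (Z' i ω) ^ 2) = fun ω => (Z i ω) ^ 2 := by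
      intro i; funext ω; simp [hZ, hZ']; ring
    calc ∑ i : Fin n, ∫ ω, (Z' i ω) ^ 2 ∂P = ∑ i : Fin n, ∫ ω, (Z i ω) ^ 2 ∂P := by
          refine Finset.sum_congr rfl fun i _ => ?_; rw [this i]
      _ ≤ (n : ℝ) + T := hV
  -- centering bound
  have hμsum : ∑ i : Fin n, |μv i| ≤ T / M ^ (p - 1) := by
    have hstep : ∀ i : Fin n, |μv i| ≤ (∫ ω, |W i ω| ^ p ∂P) / M ^ (p - 1) := by
      intro i
      set R : Ω → ℝ := fun ω => W i ω - Y i ω with hR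
      have hRint : Integrable R P := (hint i).sub (hYint i)
      have hμR : μv i = -∫ ω, R ω ∂P := by
        rw [hμv]
        simp only
        rw [show (fun ω => R ω) = fun ω => W i ω - Y i ω from rfl,
          integral_sub (hint i) (hYint i), hmean i]
        ring
      have hRbd : ∀ ω, |R ω| ≤ |W i ω| ^ p / M ^ (p - 1) := by
        intro ω
        by_cases h : |W i ω| ≤ M
        · simp only [hR, hY]
          rw [if_pos h]
          simp only [sub_self, abs_zero]
          positivity
        · push_neg at h
          simp only [hR, hY]
          rw [if_neg (not_le.2 h), sub_zero]
          have hW1 : (1:ℝ) ≤ |W i ω| := le_trans hM h.le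
          have hW0 : (0:ℝ) < |W i ω| := lt_of_lt_of_le one_pos hW1
          rw [le_div_iff₀ (Real.rpow_pos_of_pos hM0 _)]
          calc |W i ω| * M ^ (p-1) ≤ |W i ω| * |W i ω| ^ (p-1) := by
                refine mul_le_mul_of_nonneg_left ?_ (abs_nonneg _)
                exact Real.rpow_le_rpow hM0.le h.le (by linarith)
            _ = |W i ω| ^ p := by
                rw [← Real.rpow_one_add' (by positivity) (by intro hc; linarith)]
                ring_nf
      calc |μv i| = |∫ ω, R ω ∂P| := by rw [hμR, abs_neg]
        _ ≤ ∫ ω, |R ω| ∂P := aux_abs_integral P _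
        _ ≤ ∫ ω, |W i ω| ^ p / M ^ (p - 1) ∂P :=
            integral_mono hRint.abs ((hmomint i).div_const _) hRbd
        _ = (∫ ω, |W i ω| ^ p ∂P) / M ^ (p - 1) := integral_div _ _
    calc ∑ i : Fin n, |μv i| ≤ ∑ i : Fin n, (∫ ω, |W i ω| ^ p ∂P) / M ^ (p - 1) :=
          Finset.sum_le_sum fun i _ => hstep i
      _ = (∑ i : Fin n, ∫ ω, |W i ω| ^ p ∂P) / M ^ (p - 1) := by
          rw [← Finset.sum_div]
      _ ≤ T / M ^ (p - 1) := by gcongr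
  -- event decomposition
  set A : Set Ω := ⋃ i : Fin n, {ω | M < |W i ω|} with hA
  set B : Set Ω := {ω | a ≤ ∑ i, Z i ω} with hB
  set B' : Set Ω := {ω | a ≤ ∑ i, Z' i ω} with hB'
  have hsub : {ω | 3 * a ≤ |∑ i, W i ω|} ⊆ A ∪ (B ∪ B') := by
    intro ω hω
    simp only [Set.mem_setOf_eq] at hω
    by_cases hAω : ω ∈ A
    · exact Set.mem_union_left _ hAω
    · right
      have hall : ∀ i : Fin n, |W i ω| ≤ M := by
        intro i
        by_contra hcon
        exact hAω (Set.mem_iUnion.2 ⟨i, by simp only [Set.mem_setOf_eq]; linarith [not_le.1 hcon]⟩)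
      have hYW : ∀ i : Fin n, Y i ω = W i ω := fun i => if_pos (hall i)
      have hsumZ : ∑ i, Z i ω = ∑ i, W i ω - ∑ i, μv i := by
        rw [show (fun i => Z i ω) = fun i => Y i ω - μv i from rfl, Finset.sum_sub_distrib]
        congr 1
        exact Finset.sum_congr rfl fun i _ => hYW i
      have hμabs : |∑ i, μv i| ≤ a := by
        calc |∑ i, μv i| ≤ ∑ i : Fin n, |μv i| := Finset.abs_sum_le_sum_abs _ _
          _ ≤ T / M ^ (p - 1) := hμsum
          _ ≤ a := hmu
      have habsZ : a ≤ |∑ i, Z i ω| := by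
        rw [hsumZ]
        have h1 := abs_sub_abs_le_abs_sub (∑ i, W i ω) (∑ i, μv i)
        have h2 := abs_le.1 hμabs
        calc a ≤ 3 * a - a := by linarith
          _ ≤ |∑ i, W i ω| - |∑ i, μv i| := by
              have := abs_le.1 hμabs; linarith
          _ ≤ |∑ i, W i ω - ∑ i, μv i| := h1
      rcases le_abs.1 habsZ with h | h
      · exact Set.mem_union_left _ h
      · refine Set.mem_union_right _ ?_
        simp only [hB', Set.mem_setOf_eq]
        have : ∑ i, Z' i ω = -∑ i, Z i ω := by
          rw [show (fun i => Z' i ω) = fun i => -(Z i ω) by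
            funext i; simp [hZ, hZ'], Finset.sum_neg_distrib]
        rw [this]; exact h
  -- Markov bound on A
  have hAbound : (P A).toReal ≤ T / M ^ p := by
    have hMp : (0:ℝ) < M ^ p := Real.rpow_pos_of_pos hM0 _
    have hstep : ∀ i : Fin n, (P {ω | M < |W i ω|}).toReal ≤ (∫ ω, |W i ω| ^ p ∂P) / M ^ p := by
      intro i
      have hsub2 : {ω | M < |W i ω|} ⊆ {ω | M ^ p ≤ |W i ω| ^ p} := by
        intro ω hω
        simp only [Set.mem_setOf_eq] at *
        exact Real.rpow_le_rpow hM0.le hω.le hp0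
      have hmkv := mul_meas_ge_le_integral_of_nonneg
        (ae_of_all P fun ω => Real.rpow_nonneg (abs_nonneg (W i ω)) p) (hmomint i) (M ^ p)
      rw [le_div_iff₀ hMp]
      calc (P {ω | M < |W i ω|}).toReal * M ^ p
          ≤ (P {ω | M ^ p ≤ |W i ω| ^ p}).toReal * M ^ p := by
            refine mul_le_mul_of_nonneg_right ?_ hMp.le
            exact ENNReal.toReal_mono (measure_ne_top P _) (measure_mono hsub2)
        _ ≤ ∫ ω, |W i ω| ^ p ∂P := by rw [mul_comm]; exact hmkv
    calc (P A).toReal ≤ (∑ i : Fin n, P {ω | M < |W i ω|}).toReal := by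
          refine ENNReal.toReal_mono ?_ (measure_iUnion_fintype_le _ _)
          exact (ENNReal.sum_lt_top.mpr fun i _ => measure_lt_top P _).ne
      _ = ∑ i : Fin n, (P {ω | M < |W i ω|}).toReal :=
          ENNReal.toReal_sum fun i _ => measure_ne_top P _
      _ ≤ ∑ i : Fin n, (∫ ω, |W i ω| ^ p ∂P) / M ^ p := Finset.sum_le_sum fun i _ => hstep i
      _ = (∑ i : Fin n, ∫ ω, |W i ω| ^ p ∂P) / M ^ p := by rw [← Finset.sum_div]
      _ ≤ T / M ^ p := by gcongr
  -- Chernoff bounds on B and B'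
  have ht0 : (0:ℝ) ≤ 1 / (2 * M) := by positivity
  have htL : (1 / (2 * M)) * (2 * M) = 1 := by field_simp
  have hexp_eq : -(1 / (2 * M)) * a + (1 / (2 * M)) ^ 2 * ((n : ℝ) + T)
      = -(a / (2 * M)) + ((n : ℝ) + T) / (4 * M ^ 2) := by
    field_simp; ring
  have hBbound : (P B).toReal
      ≤ Real.exp (-(a / (2 * M)) + ((n : ℝ) + T) / (4 * M ^ 2)) := by
    rw [← hexp_eq]
    exact aux_chernoff_sum P Z hZmeas hZindep (2 * M) (by linarith) hZbd hZmean
      (1 / (2 * M)) a ((n : ℝ) + T) ht0 htL.le hV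
  have hB'bound : (P B').toReal
      ≤ Real.exp (-(a / (2 * M)) + ((n : ℝ) + T) / (4 * M ^ 2)) := by
    rw [← hexp_eq]
    exact aux_chernoff_sum P Z' hZ'meas hZ'indep (2 * M) (by linarith) hZ'bd hZ'mean
      (1 / (2 * M)) a ((n : ℝ) + T) ht0 htL.le hV'
  -- combine
  have hPle : P {ω | 3 * a ≤ |∑ i, W i ω|} ≤ P A + (P B + P B') :=
    (measure_mono hsub).trans ((measure_union_le _ _).trans
      (add_le_add le_rfl (measure_union_le _ _)))
  have hne : P A + (P B + P B') ≠ ⊤ := by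
    simp [measure_ne_top P A, measure_ne_top P B, measure_ne_top P B',
      ENNReal.add_ne_top]
  calc (P {ω | 3 * a ≤ |∑ i, W i ω|}).toReal
      ≤ (P A + (P B + P B')).toReal := ENNReal.toReal_mono hne hPle
    _ = (P A).toReal + ((P B).toReal + (P B').toReal) := by
        rw [ENNReal.toReal_add (measure_ne_top P A) (ENNReal.add_ne_top.2
          ⟨measure_ne_top P B, measure_ne_top P B'⟩),
          ENNReal.toReal_add (measure_ne_top P B) (measure_ne_top P B')]
    _ ≤ T / M ^ p + 2 * Real.exp (-(a / (2 * M)) + ((n : ℝ) + T) / (4 * M ^ 2)) := by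
        have := hAbound; have := hBbound; have := hB'bound; linarith

lemma aux_tsum_ne_top {Ω : Type*} [MeasurableSpace Ω] (P : Measure Ω) [IsProbabilityMeasure P]
    (s : ℕ → Set Ω) (b : ℕ → ℝ) (hb : Summable b)
    (h : ∀ᶠ n in atTop, (P (s n)).toReal ≤ b n) : (∑' n, P (s n)) ≠ ⊤ := by
  have hsum : Summable (fun n => (P (s n)).toReal) :=
    aux_summable_of_eventually_le (fun n => ENNReal.toReal_nonneg) h hb
  have heq : ∑' n, P (s n) = ENNReal.ofReal (∑' n, (P (s n)).toReal) := by
    rw [ENNReal.ofReal_tsum_of_nonneg (fun n => ENNReal.toReal_nonneg) hsum]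
    exact tsum_congr fun n => (ENNReal.ofReal_toReal (measure_ne_top P _)).symm
  rw [heq]
  exact ENNReal.ofReal_ne_top

lemma aux_key {Ω : Type*} [MeasurableSpace Ω] (P : Measure Ω) [IsProbabilityMeasure P]
    (X : ℕ → ℕ → Ω → ℝ)
    (hmeas : ∀ n i, Measurable (X n i))
    (hindep : ∀ n : ℕ,
      iIndepFun (fun i : Fin n => X n i) P)
    (hint : ∀ n : ℕ, ∀ i < n, Integrable (X n i) P)
    (hmean : ∀ n : ℕ, ∀ i < n, ∫ ω, X n i ω ∂P = 0)
    (κ : ℝ) (hκ0 : 0 < κ) (hκ1 : κ < 1) (c : ℝ) (hc : 0 ≤ c)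
    (hmomint : ∀ n : ℕ, ∀ i < n, Integrable (fun ω => |X n i ω| ^ (2 + κ)) P)
    (hmom : ∀ n : ℕ,
      (∑ i ∈ Finset.range n, ∫ ω, |X n i ω| ^ (2 + κ) ∂P) / (n : ℝ)
        ≤ c * (n : ℝ) ^ (κ / 2))
    (ε : ℝ) (hε : 0 < ε) :
    ∀ᵐ ω ∂P, ∀ᶠ n in atTop, |∑ i ∈ Finset.range n, X n i ω| < ε * n := by
  set p : ℝ := 2 + κ with hp_def
  set α : ℝ := (8 + 3 * κ) / (8 + 4 * κ) with hα_def
  have hden : (0:ℝ) < 8 + 4 * κ := by linarith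
  have hα0 : (1:ℝ)/2 < α := by rw [hα_def, lt_div_iff₀ hden]; linarith
  have hα1 : α < 1 := by rw [hα_def, div_lt_one hden]; linarith
  have hαpos : (0:ℝ) < α := by linarith
  set β : ℝ := 1 - α with hβ_def
  have hβ : (0:ℝ) < β := by simp [hβ_def]; linarith
  set e₁ : ℝ := 1 + κ / 2 - α * p with he₁_def
  have he₁ : e₁ < -1 := by
    have h : 2 + κ / 2 < (8 + 3 * κ) * (2 + κ) / (8 + 4 * κ) := by
      rw [lt_div_iff₀ hden]; nlinarith
    have h2 : α * p = (8 + 3 * κ) * (2 + κ) / (8 + 4 * κ) := by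
      rw [hα_def, hp_def]; ring
    rw [he₁_def, h2]
    linarith
  -- the summable bound
  set b : ℕ → ℝ := fun n => c * (n:ℝ) ^ e₁ + 2 * Real.exp (-((ε/12) * (n:ℝ) ^ β)) with hb_def
  have hbsummable : Summable b := by
    refine Summable.add ?_ ?_
    · exact (Real.summable_nat_rpow.2 (by linarith)).mul_left c
    · exact (aux_summable_exp_rpow (by positivity) hβ).mul_left 2
  set s : ℕ → Set Ω := fun n => {ω | ε * n ≤ |∑ i ∈ Finset.range n, X n i ω|} with hs_def
  -- eventual conditions
  have hE2 : ∀ᶠ n : ℕ in atTop, c * (n:ℝ) ^ (κ/2 - α * (1 + κ)) ≤ ε / 3 := by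
    have hneg : κ/2 - α * (1 + κ) < 0 := by nlinarith
    have h1 : Tendsto (fun n : ℕ => c * (n:ℝ) ^ (κ/2 - α * (1 + κ))) atTop (𝓝 (c * 0)) := by
      refine Tendsto.const_mul c ?_
      have := (tendsto_rpow_neg_atTop (by linarith : 0 < -(κ/2 - α * (1 + κ)))).comp
        tendsto_natCast_atTop_atTop
      simpa [Function.comp_def] using this
    rw [mul_zero] at h1
    exact h1.eventually_le_const (by positivity)
  have hE3 : ∀ᶠ n : ℕ in atTop, ((1 + c)/4) * (n:ℝ) ^ (κ/2 - α) ≤ ε / 12 := by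
    have h1 : Tendsto (fun n : ℕ => ((1 + c)/4) * (n:ℝ) ^ (κ/2 - α)) atTop (𝓝 (((1+c)/4) * 0)) := by
      refine Tendsto.const_mul _ ?_
      have := (tendsto_rpow_neg_atTop (by nlinarith : 0 < -(κ/2 - α))).comp
        tendsto_natCast_atTop_atTop
      simpa [Function.comp_def] using this
    rw [mul_zero] at h1
    exact h1.eventually_le_const (by positivity)
  have hbound : ∀ᶠ n : ℕ in atTop, (P (s n)).toReal ≤ b n := by
    filter_upwards [hE2, hE3, eventually_ge_atTop 1] with n hn2 hn3 hn1
    have hn0 : (0:ℝ) < (n:ℝ) := by exact_mod_cast hn1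
    have hn1' : (1:ℝ) ≤ (n:ℝ) := by exact_mod_cast hn1
    set M : ℝ := (n:ℝ) ^ α with hM_def
    have hM : 1 ≤ M := Real.one_le_rpow hn1' hαpos.le
    have hM0 : (0:ℝ) < M := lt_of_lt_of_le one_pos hM
    set T : ℝ := c * (n:ℝ) ^ (1 + κ/2) with hT_def
    set a : ℝ := ε * (n:ℝ) / 3 with ha_def
    have hT : ∑ i : Fin n, ∫ ω, |X n i ω| ^ p ∂P ≤ T := by
      rw [Fin.sum_univ_eq_sum_range (fun i => ∫ ω, |X n i ω| ^ p ∂P) n]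
      have h1 := hmom n
      rw [div_le_iff₀ hn0] at h1
      calc ∑ i ∈ Finset.range n, ∫ ω, |X n i ω| ^ p ∂P ≤ c * (n:ℝ) ^ (κ/2) * n := h1
        _ = T := by
            rw [hT_def, mul_assoc, ← Real.rpow_add_one hn0.ne' (κ/2)]
            ring_nf
    have hmu : T / M ^ (p - 1) ≤ a := by
      have hMp1 : M ^ (p - 1) = (n:ℝ) ^ (α * (p - 1)) := by
        rw [hM_def, ← Real.rpow_mul hn0.le]
      have he : T / M ^ (p - 1) = (c * (n:ℝ) ^ (κ/2 - α * (1 + κ))) * (n:ℝ) := by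
        rw [hT_def, hMp1, mul_div_assoc, ← Real.rpow_sub hn0, mul_assoc,
          ← Real.rpow_add_one hn0.ne']
        congr 2
        rw [hp_def]; ring
      rw [he, ha_def]
      calc (c * (n:ℝ) ^ (κ/2 - α * (1 + κ))) * (n:ℝ) ≤ (ε / 3) * (n:ℝ) :=
            mul_le_mul_of_nonneg_right hn2 hn0.le
        _ = ε * (n:ℝ) / 3 := by ring
    have hrow := aux_row_bound P (fun i : Fin n => X n i)
      (fun i => hmeas n i) (hindep n) (fun i => hint n i i.isLt)
      (fun i => hmean n i i.isLt) p (by rw [hp_def]; linarith)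
      (fun i => hmomint n i i.isLt) T M a hT hM (by positivity) hmu
    have hset : s n = {ω | 3 * a ≤ |∑ i : Fin n, X n i ω|} := by
      rw [hs_def]
      ext ω
      simp only [Set.mem_setOf_eq]
      rw [Fin.sum_univ_eq_sum_range (fun i => X n i ω) n, ha_def]
      constructor <;> intro h <;> linarith
    rw [hset]
    refine le_trans hrow ?_
    have h1 : T / M ^ p = c * (n:ℝ) ^ e₁ := by
      rw [hT_def, hM_def, ← Real.rpow_mul hn0.le, mul_div_assoc, ← Real.rpow_sub hn0,
        he₁_def]
    have h2 : -(a / (2 * M)) + ((n : ℝ) + T) / (4 * M ^ 2) ≤ -((ε/12) * (n:ℝ) ^ β) := by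
      have haM : a / (2 * M) = (ε / 6) * (n:ℝ) ^ β := by
        rw [ha_def, hM_def, hβ_def]
        rw [Real.rpow_sub hn0, Real.rpow_one]
        field_simp
        ring
      have hMsq : M ^ 2 = (n:ℝ) ^ (2 * α) := by
        rw [hM_def, ← Real.rpow_natCast ((n:ℝ) ^ α) 2, ← Real.rpow_mul hn0.le]
        norm_num
        ring_nf
      have hnT : (n:ℝ) + T ≤ (1 + c) * (n:ℝ) ^ (1 + κ/2) := by
        have h8 : (n:ℝ) ≤ (n:ℝ) ^ (1 + κ/2) := by
          calc (n:ℝ) = (n:ℝ) ^ (1:ℝ) := (Real.rpow_one _).symm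
            _ ≤ (n:ℝ) ^ (1 + κ/2) :=
              Real.rpow_le_rpow_of_exponent_le hn1' (by linarith)
        have h7 : (1 + c) * (n:ℝ) ^ (1 + κ/2)
            = (n:ℝ) ^ (1 + κ/2) + c * (n:ℝ) ^ (1 + κ/2) := by ring
        rw [hT_def, h7]
        linarith
      have h4 : ((n : ℝ) + T) / (4 * M ^ 2) ≤ (ε/12) * (n:ℝ) ^ β := by
        rw [hMsq]
        have h5 : ((n : ℝ) + T) / (4 * (n:ℝ) ^ (2*α)) ≤
            ((1 + c) * (n:ℝ) ^ (1 + κ/2)) / (4 * (n:ℝ) ^ (2*α)) := by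
          gcongr
        refine le_trans h5 ?_
        have hee : (n:ℝ) ^ (1 + κ/2)
            = (n:ℝ) ^ (κ/2 - α) * (n:ℝ) ^ (1 - α) * (n:ℝ) ^ (2*α) := by
          rw [← Real.rpow_add hn0, ← Real.rpow_add hn0]
          congr 1
          ring
        have h6 : ((1 + c) * (n:ℝ) ^ (1 + κ/2)) / (4 * (n:ℝ) ^ (2*α))
            = (((1 + c)/4) * (n:ℝ) ^ (κ/2 - α)) * (n:ℝ) ^ β := by
          rw [hβ_def, hee]
          have hpos : (0:ℝ) < (n:ℝ) ^ (2*α) := Real.rpow_pos_of_pos hn0 _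
          field_simp
        rw [h6]
        exact mul_le_mul_of_nonneg_right hn3 (Real.rpow_nonneg hn0.le _)
      rw [haM]
      have : (ε/6) * (n:ℝ) ^ β - (ε/12) * (n:ℝ) ^ β = (ε/12) * (n:ℝ) ^ β := by ring
      linarith
    rw [hb_def, h1]
    simp only
    gcongr
  -- Borel-Cantelli
  have htsum := aux_tsum_ne_top P s b hbsummable hbound
  filter_upwards [ae_eventually_notMem htsum] with ω hω
  filter_upwards [hω] with n hn
  rw [hs_def] at hn
  simpa using not_le.1 hn

/-- Strong law of large numbers for triangular arrays: if for each `n`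
the row `X_{n,0}, …, X_{n,n-1}` consists of mutually independent, mean-zero random
variables and `n⁻¹ ∑_{i<n} E|X_{n,i}|^{2+κ} ≤ c n^{κ/2}` for constants `0 < κ < 1`
and `c < ∞`, then `(1/n) ∑_{i<n} X_{n,i} → 0` almost surely. -/
theorem slln_triangular_array
    {Ω : Type*} [MeasurableSpace Ω] (P : Measure Ω) [IsProbabilityMeasure P]
    (X : ℕ → ℕ → Ω → ℝ)
    (hmeas : ∀ n i, Measurable (X n i))
    (hindep : ∀ n : ℕ,
      iIndepFun (fun i : Fin n => X n i) P)
    (hint : ∀ n : ℕ, ∀ i < n, Integrable (X n i) P)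
    (hmean : ∀ n : ℕ, ∀ i < n, ∫ ω, X n i ω ∂P = 0)
    (κ : ℝ) (hκ0 : 0 < κ) (hκ1 : κ < 1) (c : ℝ) (hc : 0 ≤ c)
    (hmomint : ∀ n : ℕ, ∀ i < n, Integrable (fun ω => |X n i ω| ^ (2 + κ)) P)
    (hmom : ∀ n : ℕ,
      (∑ i ∈ Finset.range n, ∫ ω, |X n i ω| ^ (2 + κ) ∂P) / (n : ℝ)
        ≤ c * (n : ℝ) ^ (κ / 2)) :
    ∀ᵐ ω ∂P, Tendsto (fun n : ℕ => (∑ i ∈ Finset.range n, X n i ω) / (n : ℝ))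
      atTop (𝓝 0) := by
  have hkey : ∀ᵐ ω ∂P, ∀ k : ℕ,
      ∀ᶠ n in atTop, |∑ i ∈ Finset.range n, X n i ω| < (1 / (k + 1 : ℝ)) * n := by
    rw [ae_all_iff]
    intro k
    exact aux_key P X hmeas hindep hint hmean κ hκ0 hκ1 c hc hmomint hmom
      (1 / (k + 1 : ℝ)) (by positivity)
  filter_upwards [hkey] with ω hω
  rw [Metric.tendsto_atTop]
  intro ε hε
  obtain ⟨k, hk⟩ := exists_nat_one_div_lt hε
  have h1 := hω k
  obtain ⟨N, hN⟩ := eventually_atTop.1 (h1.and (eventually_ge_atTop 1))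
  refine ⟨N, fun n hn => ?_⟩
  obtain ⟨hn1, hn2⟩ := hN n hn
  have hn0 : (0:ℝ) < (n:ℝ) := by exact_mod_cast hn2
  rw [Real.dist_eq, sub_zero, abs_div, abs_of_nonneg hn0.le]
  have h2 : |∑ i ∈ Finset.range n, X n i ω| / (n:ℝ) < 1 / (k + 1 : ℝ) := by
    rw [div_lt_iff₀ hn0]
    calc |∑ i ∈ Finset.range n, X n i ω| < (1 / (k + 1 : ℝ)) * n := hn1
      _ = 1 / (k + 1 : ℝ) * n := rfl
  calc |∑ i ∈ Finset.range n, X n i ω| / (n:ℝ) < 1 / (k + 1 : ℝ) := h2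
    _ < ε := by exact_mod_cast hk
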